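/- If G is a finite tree (a finite connected simple graph with no cycles) with at least two vertices, then the Steinerberger boundary ∂G is exactly the set of vertices of degree 1. -/
import Mathlib

open Finset

variable {V : Type*}

/-- The Steinerberger boundary of a graph. -/
def sBoundary (G : SimpleGraph V) [Fintype V] [DecidableRel G.Adj] : Set V :=
  if Fintype.card V = 1 then Set.univ
  else {v | ∃ u : V, ∑ w ∈ G.neighborFinset v, G.dist w u < G.degree v * G.dist v u}

/-- In a tree, any two distinct neighbors of `v` cannot both be at distance `≤ dist v u`. -/
lemma tree_unique_close_neighbor [Fintype V] (G : SimpleGraph V) [DecidableRel G.Adj]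
    (ht : G.IsTree) {v u w₁ w₂ : V} (h1 : G.Adj v w₁) (h2 : G.Adj v w₂)
    (hd1 : G.dist w₁ u ≤ G.dist v u) (hd2 : G.dist w₂ u ≤ G.dist v u) : w₁ = w₂ := by
  classical
  have hconn := ht.isConnected
  have key : ∀ w : V, G.Adj v w → G.dist w u ≤ G.dist v u →
      ∃ p : G.Walk w u, p.IsPath ∧ v ∉ p.support := by
    intro w hadj hle
    obtain ⟨p, hp, hlen⟩ := (hconn.preconnected w u).exists_path_of_dist
    refine ⟨p, hp, fun hv => ?_⟩
    have hspec := p.take_spec hv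
    have hlen2 : (p.takeUntil v hv).length + (p.dropUntil v hv).length = p.length := by
      rw [← SimpleGraph.Walk.length_append, hspec]
    have htake : 1 ≤ (p.takeUntil v hv).length := by
      rcases Nat.eq_zero_or_pos (p.takeUntil v hv).length with h0 | h1
      · exact absurd (SimpleGraph.Walk.eq_of_length_eq_zero h0) hadj.ne'
      · exact h1
    have := G.dist_le (p.dropUntil v hv)
    omega
  obtain ⟨p1, hp1, hv1⟩ := key w₁ h1 hd1
  obtain ⟨p2, hp2, hv2⟩ := key w₂ h2 hd2
  have hq1 : (SimpleGraph.Walk.cons h1 p1).IsPath := by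
    rw [SimpleGraph.Walk.cons_isPath_iff]; exact ⟨hp1, hv1⟩
  have hq2 : (SimpleGraph.Walk.cons h2 p2).IsPath := by
    rw [SimpleGraph.Walk.cons_isPath_iff]; exact ⟨hp2, hv2⟩
  have heq : SimpleGraph.Walk.cons h1 p1 = SimpleGraph.Walk.cons h2 p2 :=
    (ht.existsUnique_path v u).unique hq1 hq2
  have := congrArg (fun q : G.Walk v u => q.getVert 1) heq
  simpa using this

theorem sBoundary_of_tree [Fintype V] (G : SimpleGraph V) [DecidableRel G.Adj]
    (ht : G.IsTree) (h2 : 2 ≤ Fintype.card V) :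
    sBoundary G = {v : V | G.degree v = 1} := by
  classical
  have hconn := ht.isConnected
  have hcard : Fintype.card V ≠ 1 := by omega
  rw [sBoundary, if_neg hcard]
  ext v
  simp only [Set.mem_setOf_eq]
  constructor
  · rintro ⟨u, hu⟩
    by_contra hdeg
    rcases Nat.lt_or_ge (G.degree v) 2 with hlt | hge
    · have h0 : G.degree v = 0 := by omega
      have hempty : G.neighborFinset v = ∅ := by
        rw [← Finset.card_eq_zero, SimpleGraph.card_neighborFinset_eq_degree]; exact h0
      rw [hempty, h0] at hu
      simp at hu
    · -- degree ≥ 2 : derive contradiction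
      set d := G.dist v u with hd
      rcases eq_or_ne v u with rfl | hne
      · have hd0 : d = 0 := by rw [hd, SimpleGraph.dist_self]
        rw [hd0] at hu
        simp at hu
      have hdpos : 1 ≤ d := (hconn.preconnected v u).pos_dist_of_ne hne
      -- lower bounds on neighbor distances
      have hlow : ∀ w ∈ G.neighborFinset v, d ≤ G.dist w u + 1 := by
        intro w hw
        rw [SimpleGraph.mem_neighborFinset] at hw
        calc d ≤ G.dist v w + G.dist w u := hconn.dist_triangle
        _ = G.dist w u + 1 := by rw [SimpleGraph.dist_eq_one_iff_adj.mpr hw]; omega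
      by_cases hex : ∃ w₀ ∈ G.neighborFinset v, G.dist w₀ u ≤ d
      · obtain ⟨w₀, hw₀, hle₀⟩ := hex
        have hsum : ∑ w ∈ G.neighborFinset v, G.dist w u
            = G.dist w₀ u + ∑ w ∈ (G.neighborFinset v).erase w₀, G.dist w u :=
          (Finset.add_sum_erase _ _ hw₀).symm
        have hrest : ∀ w ∈ (G.neighborFinset v).erase w₀, d + 1 ≤ G.dist w u := by
          intro w hw
          obtain ⟨hne', hw'⟩ := Finset.mem_erase.mp hw
          rcases Nat.lt_or_ge d (G.dist w u) with h | h
          · omega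
          · exact absurd (tree_unique_close_neighbor G ht
              ((SimpleGraph.mem_neighborFinset _ _ _).mp hw')
              ((SimpleGraph.mem_neighborFinset _ _ _).mp hw₀) h hle₀) hne'
        have hsum2 : ((G.neighborFinset v).erase w₀).card * (d + 1)
            ≤ ∑ w ∈ (G.neighborFinset v).erase w₀, G.dist w u :=
          Finset.card_nsmul_le_sum _ _ _ hrest
        have hcarde : ((G.neighborFinset v).erase w₀).card = G.degree v - 1 := by
          rw [Finset.card_erase_of_mem hw₀, SimpleGraph.card_neighborFinset_eq_degree]
        rw [hcarde] at hsum2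
        have hlow0 : d ≤ G.dist w₀ u + 1 := hlow w₀ hw₀
        -- arithmetic contradiction
        have hfinal : G.degree v * d ≤ G.dist w₀ u + (G.degree v - 1) * (d + 1) := by
          obtain ⟨c, hc⟩ : ∃ c, G.degree v = c + 2 := ⟨G.degree v - 2, by omega⟩
          obtain ⟨e, he⟩ : ∃ e, d = e + 1 := ⟨d - 1, by omega⟩
          have hw0 : e ≤ G.dist w₀ u := by omega
          rw [hc, he]
          have h1 : c + 2 - 1 = c + 1 := by omega
          rw [h1]
          nlinarith
        omega
      · push_neg at hex
        have hall : ∀ w ∈ G.neighborFinset v, d ≤ G.dist w u := fun w hw =>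
          le_of_lt (hex w hw)
        have : G.degree v * d ≤ ∑ w ∈ G.neighborFinset v, G.dist w u := by
          rw [← SimpleGraph.card_neighborFinset_eq_degree]
          exact Finset.card_nsmul_le_sum _ _ _ hall
        omega
  · intro hdeg
    obtain ⟨w, hw⟩ : ∃ w, G.neighborFinset v = {w} := Finset.card_eq_one.mp
      (by rwa [SimpleGraph.card_neighborFinset_eq_degree])
    have hadj : G.Adj v w := by
      rw [← SimpleGraph.mem_neighborFinset, hw]; exact Finset.mem_singleton_self w
    refine ⟨w, ?_⟩
    rw [hw, Finset.sum_singleton, SimpleGraph.dist_self, hdeg,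
      SimpleGraph.dist_eq_one_iff_adj.mpr hadj]
    omega
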